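/- Let (M,d) be a metric space and let x : [0,∞) → M be cadlag (right-continuous with left limits). Let H : M → ℝ be continuous, let r ≥ 0, let ν be a finite nonnegative Borel measure on [−r,0], let K > 0, and let f : [0,∞) → [0,∞) be Borel measurable with ∫_0^T f(s) ds < ∞ for every T > 0 and limsup_{t→∞} (1/t) ∫_0^t f(s) ds ≤ K. Assume that for every ε > 0 there exists R > 0 such that for all t > r: |H(x(t))|·1_{|H(x(t))| > R} ≤ ε · ∫_{[−r,0]} f(t+s) dν(s). For t > 0 let μ_t be the Borel probability measure on M defined by μ_t(B) = (1/t)·λ({ s ∈ [0,t] : x(s) ∈ B }), where λ is Lebesgue measure. If t_n → ∞ and μ_{t_n} converges weakly to a Borel probability measure μ₀, then ∫_M |H| dμ₀ < ∞ and ∫_M H dμ_{t_n} → ∫_M H dμ₀. -/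

import Mathlib

open MeasureTheory Filter

/-- Auxiliary: a right-continuous path, adjusted to be constant on `(-∞,0]`, is measurable. -/
lemma stmt11_meas_aux {M : Type*} [MetricSpace M] [MeasurableSpace M] [BorelSpace M] (x : ℝ → M)
    (hx_rc : ∀ t : ℝ, 0 ≤ t → ContinuousWithinAt x (Set.Ici t) t) :
    Measurable (fun s => x (max s 0)) := by
  have hF : ∀ n : ℕ, Measurable (fun s : ℝ => x ((⌊max s 0 * 2^n⌋ + 1 : ℤ) / 2^n)) := by
    intro n
    exact (measurable_of_countable (fun k : ℤ => x ((k + 1 : ℤ) / 2^n))).comp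
      (Int.measurable_floor.comp ((measurable_id.max measurable_const).mul_const _))
  apply measurable_of_tendsto_metrizable hF
  rw [tendsto_pi_nhds]
  intro s
  have ha0 : (0:ℝ) ≤ max s 0 := le_max_right _ _
  set a : ℝ := max s 0 with ha
  have key : Tendsto (fun n : ℕ => ((⌊a * 2^n⌋ + 1 : ℤ) / 2^n : ℝ)) atTop
      (nhdsWithin a (Set.Ici a)) := by
    apply tendsto_nhdsWithin_of_tendsto_nhds_of_eventually_within
    · have h1 : ∀ n : ℕ, |((⌊a * 2^n⌋ + 1 : ℤ) / 2^n : ℝ) - a| ≤ (1/2:ℝ)^n := by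
        intro n
        have h2 : (0:ℝ) < 2^n := by positivity
        rw [abs_le]
        have hfl := Int.floor_le (a * 2^n)
        have hfu := Int.lt_floor_add_one (a * 2^n)
        have hpow : (1/2:ℝ)^n * 2^n = 1 := by
          rw [div_pow, one_pow, div_mul_cancel₀]; exact ne_of_gt h2
        constructor
        · have hle : a ≤ (↑(⌊a * 2^n⌋ + 1))/2^n := by
            rw [le_div_iff₀ h2]; push_cast; linarith
          have hnn : (0:ℝ) ≤ (1/2)^n := by positivity
          linarith
        · rw [sub_le_iff_le_add, div_le_iff₀ h2]
          push_cast
          nlinarith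
      have h0 : Tendsto (fun n : ℕ => ((1:ℝ)/2)^n) atTop (nhds 0) :=
        tendsto_pow_atTop_nhds_zero_of_lt_one (by norm_num) (by norm_num)
      rw [tendsto_iff_dist_tendsto_zero]
      apply squeeze_zero (fun n => dist_nonneg) (fun n => ?_) h0
      rw [Real.dist_eq]; exact h1 n
    · filter_upwards with n
      have h2 : (0:ℝ) < 2^n := by positivity
      have := Int.lt_floor_add_one (a * 2^n)
      rw [Set.mem_Ici, le_div_iff₀ h2]
      push_cast
      linarith
  exact ((hx_rc a ha0).tendsto).comp key

/-- Auxiliary: a cadlag path composed with a continuous function is bounded on compacts. -/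
lemma stmt11_bdd_aux {M : Type*} [MetricSpace M] (x : ℝ → M)
    (hx_rc : ∀ t : ℝ, 0 ≤ t → ContinuousWithinAt x (Set.Ici t) t)
    (hx_ll : ∀ t : ℝ, 0 < t → ∃ l : M, Tendsto x (nhdsWithin t (Set.Iio t)) (nhds l))
    (H : M → ℝ) (hH : Continuous H) (b : ℝ) :
    ∃ C : ℝ, 0 ≤ C ∧ ∀ s ∈ Set.Icc (0:ℝ) b, |H (x s)| ≤ C := by
  rcases lt_or_ge b 0 with hb | hb
  · exact ⟨0, le_refl 0, fun s hs => absurd (hs.1.trans hs.2) (not_le.mpr hb)⟩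
  have hloc : ∀ t ∈ Set.Icc (0:ℝ) b, ∃ δ : ℝ, 0 < δ ∧ ∃ C : ℝ,
      ∀ s, 0 ≤ s → dist s t < δ → |H (x s)| ≤ C := by
    intro t ht
    obtain ⟨δ₁, hδ₁, h₁⟩ : ∃ δ₁ > 0, ∀ s, dist s t < δ₁ → s ∈ Set.Ici t →
        |H (x s)| ≤ |H (x t)| + 1 := by
      have h : Tendsto (fun s => H (x s)) (nhdsWithin t (Set.Ici t)) (nhds (H (x t))) :=
        (hH.tendsto (x t)).comp (hx_rc t ht.1).tendsto
      have h2 : ∀ᶠ s in nhdsWithin t (Set.Ici t), |H (x s)| ≤ |H (x t)| + 1 := by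
        filter_upwards [h (Metric.ball_mem_nhds (H (x t)) one_pos)] with s hs
        rw [Set.mem_preimage, Metric.mem_ball, Real.dist_eq] at hs
        have h4 : |H (x s)| - |H (x t)| ≤ |H (x s) - H (x t)| := abs_sub_abs_le_abs_sub _ _
        linarith
      rw [eventually_nhdsWithin_iff, Metric.eventually_nhds_iff] at h2
      obtain ⟨ε, hε, h2⟩ := h2
      exact ⟨ε, hε, fun s hd hm => h2 hd hm⟩
    rcases eq_or_lt_of_le ht.1 with h0 | htpos
    · refine ⟨δ₁, hδ₁, |H (x t)| + 1, fun s hs hd => h₁ s hd ?_⟩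
      rw [Set.mem_Ici, ← h0]; exact hs
    · obtain ⟨l, hl⟩ := hx_ll t htpos
      obtain ⟨δ₂, hδ₂, h₂⟩ : ∃ δ₂ > 0, ∀ s, dist s t < δ₂ → s ∈ Set.Iio t →
          |H (x s)| ≤ |H l| + 1 := by
        have h : Tendsto (fun s => H (x s)) (nhdsWithin t (Set.Iio t)) (nhds (H l)) :=
          (hH.tendsto l).comp hl
        have h2 : ∀ᶠ s in nhdsWithin t (Set.Iio t), |H (x s)| ≤ |H l| + 1 := by
          filter_upwards [h (Metric.ball_mem_nhds (H l) one_pos)] with s hs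
          rw [Set.mem_preimage, Metric.mem_ball, Real.dist_eq] at hs
          have h4 : |H (x s)| - |H l| ≤ |H (x s) - H l| := abs_sub_abs_le_abs_sub _ _
          linarith
        rw [eventually_nhdsWithin_iff, Metric.eventually_nhds_iff] at h2
        obtain ⟨ε, hε, h2⟩ := h2
        exact ⟨ε, hε, fun s hd hm => h2 hd hm⟩
      refine ⟨min δ₁ δ₂, lt_min hδ₁ hδ₂, max (|H (x t)| + 1) (|H l| + 1), fun s hs hd => ?_⟩
      rcases lt_or_ge s t with hst | hst
      · exact le_max_of_le_right (h₂ s (hd.trans_le (min_le_right _ _)) hst)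
      · exact le_max_of_le_left (h₁ s (hd.trans_le (min_le_left _ _)) hst)
  choose! δ hδ C hC using hloc
  obtain ⟨F, hF, hcover⟩ := (isCompact_Icc (a := (0:ℝ)) (b := b)).elim_nhds_subcover
    (fun t => Metric.ball t (δ t)) (fun t ht => Metric.ball_mem_nhds t (hδ t ht))
  obtain ⟨C0, hC0⟩ := (F.image C).exists_le
  refine ⟨max C0 0, le_max_right _ _, fun s hs => ?_⟩
  obtain ⟨t, htF, hst⟩ := Set.mem_iUnion₂.mp (hcover hs)
  exact le_trans (le_trans (hC t (hF t htF) s hs.1 (Metric.mem_ball.mp hst))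
    (hC0 _ (Finset.mem_image_of_mem C htF))) (le_max_left _ _)

/-- The empirical occupation measure of a path `x : ℝ → M` up to time `t`:
`μ_t(B) = (1/t)·λ({ s ∈ [0,t] : x(s) ∈ B })`, realized as the pushforward of
`(1/t)·λ|_{[0,t]}` under `x`. -/
noncomputable def occMeasure {M : Type*} [MeasurableSpace M] (x : ℝ → M) (t : ℝ) :
    Measure M :=
  Measure.map x ((ENNReal.ofReal t)⁻¹ • volume.restrict (Set.Icc (0 : ℝ) t))

lemma stmt11_occ_lintegral {M : Type*} [MeasurableSpace M] (x : ℝ → M) {t : ℝ}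
    (hx : AEMeasurable x (volume.restrict (Set.Icc (0:ℝ) t)))
    {g : M → ENNReal} (hg : Measurable g) :
    ∫⁻ y, g y ∂(occMeasure x t)
      = (ENNReal.ofReal t)⁻¹ * ∫⁻ s in Set.Icc (0:ℝ) t, g (x s) := by
  rw [occMeasure, lintegral_map' hg.aemeasurable (hx.smul_measure _), lintegral_smul_measure, smul_eq_mul]

lemma stmt11_occ_univ {M : Type*} [MeasurableSpace M] (x : ℝ → M) {t : ℝ} (ht : 0 < t)
    (hx : AEMeasurable x (volume.restrict (Set.Icc (0:ℝ) t))) :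
    occMeasure x t Set.univ = 1 := by
  have := stmt11_occ_lintegral x hx (g := fun _ => (1:ENNReal)) measurable_const
  rw [lintegral_one, setLIntegral_one, Real.volume_Icc, sub_zero] at this
  rw [this, ENNReal.inv_mul_cancel]
  · exact (ENNReal.ofReal_pos.mpr ht).ne'
  · exact ENNReal.ofReal_ne_top

lemma stmt11_trans_aux {g : ℝ → ENNReal} (hg : Measurable g) {u r t : ℝ}
    (hu1 : -r ≤ u) (hu2 : u ≤ 0) :
    ∫⁻ s in Set.Ioc r t, g (s + u) ≤ ∫⁻ v in Set.Icc (0:ℝ) t, g v := by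
  have hmap : Measure.map (· + u) (volume : Measure ℝ) = volume := map_add_right_eq_self volume u
  have hsub : Set.Ioc r t ⊆ (· + u) ⁻¹' Set.Icc 0 t := by
    intro s hs
    simp only [Set.mem_preimage, Set.mem_Icc]
    constructor
    · linarith [hs.1]
    · linarith [hs.2]
  refine le_trans (lintegral_mono_set hsub) (le_of_eq ?_)
  exact ((setLIntegral_map measurableSet_Icc hg (measurable_add_const u)).symm.trans
    (by rw [hmap]))

lemma stmt11_mkBCF {M : Type*} [TopologicalSpace M] {g : M → ℝ} (hg : Continuous g)
    {lo hi : ℝ} (h : ∀ z, g z ∈ Set.Icc lo hi) :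
    ∃ G : BoundedContinuousFunction M ℝ, ∀ z, G z = g z := by
  refine ⟨BoundedContinuousFunction.mkOfBound ⟨g, hg⟩ (hi - lo) (fun a b => ?_), fun z => rfl⟩
  rw [Real.dist_eq, abs_le]
  have h1 := h a
  have h2 := h b
  simp only [ContinuousMap.coe_mk]
  constructor
  · linarith [h1.1, h2.2]
  · linarith [h1.2, h2.1]

/-- for a cadlag path `x` in a metric space, a continuous `H`, a
finite measure `ν` on `[−r,0]` and a nonnegative `f` with time averages bounded
by `K`, if `|H(x(t))|·1_{|H(x(t))|>R} ≤ ε ∫_{[−r,0]} f(t+s) dν(s)` for suitable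
`R = R(ε)` and all `t > r`, then along any sequence `t_n → ∞` with
`μ_{t_n} → μ₀` weakly one has `∫|H| dμ₀ < ∞` and `∫ H dμ_{t_n} → ∫ H dμ₀`. -/
theorem stmt_11 {M : Type*} [MetricSpace M] [MeasurableSpace M] [BorelSpace M]
    (x : ℝ → M)
    (hx_rc : ∀ t : ℝ, 0 ≤ t → ContinuousWithinAt x (Set.Ici t) t)
    (hx_ll : ∀ t : ℝ, 0 < t → ∃ l : M, Tendsto x (nhdsWithin t (Set.Iio t)) (nhds l))
    (H : M → ℝ) (hH : Continuous H)
    (r : ℝ) (hr : 0 ≤ r)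
    (ν : Measure ℝ) [IsFiniteMeasure ν] (hν : ν (Set.Icc (-r) 0)ᶜ = 0)
    (K : ℝ) (hK : 0 < K)
    (f : ℝ → ℝ) (hf_nonneg : ∀ s, 0 ≤ f s) (hf_meas : Measurable f)
    (hf_int : ∀ T : ℝ, 0 < T → ∫⁻ s in Set.Icc (0 : ℝ) T, ENNReal.ofReal (f s) < ⊤)
    (hf_limsup : limsup (fun t : ℝ =>
        (∫⁻ s in Set.Icc (0 : ℝ) t, ENNReal.ofReal (f s)) / ENNReal.ofReal t) atTop
        ≤ ENNReal.ofReal K)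
    (hdom : ∀ ε : ℝ, 0 < ε → ∃ R : ℝ, 0 < R ∧ ∀ t : ℝ, r < t →
      (if R < |H (x t)| then ENNReal.ofReal |H (x t)| else 0)
        ≤ ENNReal.ofReal ε * ∫⁻ s, ENNReal.ofReal (f (t + s)) ∂ν)
    (tn : ℕ → ℝ) (htn_pos : ∀ n, 0 < tn n) (htn : Tendsto tn atTop atTop)
    (μ₀ : Measure M) [IsProbabilityMeasure μ₀]
    (hweak : ∀ g : BoundedContinuousFunction M ℝ,
      Tendsto (fun n => ∫ y, g y ∂(occMeasure x (tn n))) atTop (nhds (∫ y, g y ∂μ₀))) :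
    (∫⁻ y, ENNReal.ofReal |H y| ∂μ₀ < ⊤) ∧
      Tendsto (fun n => ∫ y, H y ∂(occMeasure x (tn n))) atTop (nhds (∫ y, H y ∂μ₀)) := by
  classical
  have hy : Measurable (fun s => x (max s 0)) := stmt11_meas_aux x hx_rc
  have hxae : ∀ t : ℝ, AEMeasurable x (volume.restrict (Set.Icc (0:ℝ) t)) := by
    intro t
    refine hy.aemeasurable.congr ?_
    rw [Filter.EventuallyEq, ae_restrict_iff' measurableSet_Icc]
    filter_upwards with s hs
    simp [max_eq_left hs.1]
  have hμuniv : ∀ n, occMeasure x (tn n) Set.univ = 1 :=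
    fun n => stmt11_occ_univ x (htn_pos n) (hxae _)
  have hPM : ∀ n, IsProbabilityMeasure (occMeasure x (tn n)) := fun n => ⟨hμuniv n⟩
  have hHm : Measurable H := hH.measurable
  set tailF : ℝ → M → ENNReal :=
    fun R z => if R < |H z| then ENNReal.ofReal |H z| else 0 with htailF
  have htm : ∀ R : ℝ, Measurable (tailF R) := by
    intro R
    exact Measurable.ite (measurableSet_lt measurable_const hHm.abs)
      (ENNReal.measurable_ofReal.comp hHm.abs) measurable_const
  have htail_le : ∀ R z, tailF R z ≤ ENNReal.ofReal |H z| := by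
    intro R z; by_cases h : R < |H z| <;> simp [htailF, h]
  set C : ENNReal := (ν Set.univ + 1) * (ENNReal.ofReal K + 1) with hCdef
  have hC_ne : C ≠ ⊤ :=
    ENNReal.mul_ne_top (by simp [measure_ne_top]) (by simp)
  -- the key tail estimate along the sequence
  have h_tail : ∀ ε : ℝ, 0 < ε → ∃ R : ℝ, 0 < R ∧
      ∀ᶠ n in atTop, ∫⁻ z, tailF R z ∂(occMeasure x (tn n)) ≤ ENNReal.ofReal ε * C := by
    intro ε hε
    obtain ⟨R, hR, hdomR⟩ := hdom ε hε
    refine ⟨R, hR, ?_⟩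
    obtain ⟨B, hB0, hB⟩ := stmt11_bdd_aux x hx_rc hx_ll H hH r
    have hKbd : ∀ᶠ n in atTop,
        (∫⁻ s in Set.Icc (0:ℝ) (tn n), ENNReal.ofReal (f s)) / ENNReal.ofReal (tn n)
          < ENNReal.ofReal K + 1 :=
      htn.eventually (eventually_lt_of_limsup_lt
        (lt_of_le_of_lt hf_limsup (ENNReal.lt_add_right ENNReal.ofReal_ne_top one_ne_zero)))
    have hpos1 : (0:ENNReal) < ENNReal.ofReal ε * (ENNReal.ofReal K + 1) :=
      ENNReal.mul_pos (ENNReal.ofReal_pos.mpr hε).ne' (by simp)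
    have hinv : Tendsto
        (fun n => (ENNReal.ofReal (tn n))⁻¹ * (ENNReal.ofReal B * ENNReal.ofReal r))
        atTop (nhds 0) := by
      have h1 : Tendsto (fun n => ENNReal.ofReal (tn n)) atTop (nhds ⊤) :=
        ENNReal.tendsto_ofReal_atTop.comp htn
      have h2 : Tendsto (fun n => (ENNReal.ofReal (tn n))⁻¹) atTop (nhds 0) := by
        simpa using ENNReal.tendsto_inv_iff.mpr h1
      simpa using ENNReal.Tendsto.mul_const h2
        (Or.inr (ENNReal.mul_ne_top ENNReal.ofReal_ne_top ENNReal.ofReal_ne_top))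
    have hsm := hinv.eventually_lt_const hpos1
    have hrn : ∀ᶠ n in atTop, r < tn n := htn.eventually (eventually_gt_atTop r)
    filter_upwards [hKbd, hsm, hrn] with n hKn hsn hrtn
    have hsplit : Set.Icc (0:ℝ) (tn n) = Set.Icc 0 r ∪ Set.Ioc r (tn n) :=
      (Set.Icc_union_Ioc_eq_Icc hr hrtn.le).symm
    have hdisj : Disjoint (Set.Icc (0:ℝ) r) (Set.Ioc r (tn n)) := by
      rw [Set.disjoint_left]
      rintro s hs1 hs2
      exact absurd hs1.2 (not_le.2 hs2.1)
    rw [stmt11_occ_lintegral x (hxae (tn n)) (htm R), hsplit,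
      lintegral_union measurableSet_Ioc hdisj, mul_add]
    have hpart1 : (ENNReal.ofReal (tn n))⁻¹ * ∫⁻ s in Set.Icc (0:ℝ) r, tailF R (x s)
        ≤ ENNReal.ofReal ε * (ENNReal.ofReal K + 1) := by
      refine le_of_lt (lt_of_le_of_lt ?_ hsn)
      gcongr
      calc ∫⁻ s in Set.Icc (0:ℝ) r, tailF R (x s)
          ≤ ∫⁻ _ in Set.Icc (0:ℝ) r, ENNReal.ofReal B := by
            refine setLIntegral_mono' measurableSet_Icc fun s hs => ?_
            exact (htail_le R (x s)).trans (ENNReal.ofReal_le_ofReal (hB s hs))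
        _ = ENNReal.ofReal B * ENNReal.ofReal r := by
            rw [setLIntegral_const, Real.volume_Icc, sub_zero]
    have hpart2 : (ENNReal.ofReal (tn n))⁻¹ * ∫⁻ s in Set.Ioc r (tn n), tailF R (x s)
        ≤ ENNReal.ofReal ε * (ν Set.univ * (ENNReal.ofReal K + 1)) := by
      have hmeas2 : Measurable fun p : ℝ × ℝ => ENNReal.ofReal (f (p.1 + p.2)) :=
        (hf_meas.comp (measurable_fst.add measurable_snd)).ennreal_ofReal
      have hmeas_inner : Measurable fun s : ℝ => ∫⁻ u, ENNReal.ofReal (f (s + u)) ∂ν :=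
        Measurable.lintegral_prod_right' hmeas2
      have hstep1 : ∫⁻ s in Set.Ioc r (tn n), tailF R (x s)
          ≤ ENNReal.ofReal ε
            * ∫⁻ s in Set.Ioc r (tn n), ∫⁻ u, ENNReal.ofReal (f (s + u)) ∂ν := by
        rw [← lintegral_const_mul _ hmeas_inner]
        exact setLIntegral_mono' measurableSet_Ioc fun s hs => hdomR s hs.1
      have hswap : ∫⁻ s in Set.Ioc r (tn n), ∫⁻ u, ENNReal.ofReal (f (s + u)) ∂ν
          ≤ ν Set.univ * ∫⁻ v in Set.Icc (0:ℝ) (tn n), ENNReal.ofReal (f v) := by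
        rw [lintegral_lintegral_swap hmeas2.aemeasurable]
        have hae : ∀ᵐ u ∂ν, u ∈ Set.Icc (-r) 0 := by
          rw [ae_iff]
          exact hν
        calc ∫⁻ u, (∫⁻ s in Set.Ioc r (tn n), ENNReal.ofReal (f (s + u))) ∂ν
            ≤ ∫⁻ _, (∫⁻ v in Set.Icc (0:ℝ) (tn n), ENNReal.ofReal (f v)) ∂ν := by
              refine lintegral_mono_ae (hae.mono fun u hu => ?_)
              exact stmt11_trans_aux hf_meas.ennreal_ofReal hu.1 hu.2
          _ = ν Set.univ * ∫⁻ v in Set.Icc (0:ℝ) (tn n), ENNReal.ofReal (f v) := by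
              rw [lintegral_const, mul_comm]
      calc (ENNReal.ofReal (tn n))⁻¹ * ∫⁻ s in Set.Ioc r (tn n), tailF R (x s)
          ≤ (ENNReal.ofReal (tn n))⁻¹ * (ENNReal.ofReal ε * (ν Set.univ *
              ∫⁻ v in Set.Icc (0:ℝ) (tn n), ENNReal.ofReal (f v))) := by
            gcongr
            exact hstep1.trans (mul_le_mul_right hswap _)
        _ = ENNReal.ofReal ε * (ν Set.univ *
              ((∫⁻ v in Set.Icc (0:ℝ) (tn n), ENNReal.ofReal (f v))
                / ENNReal.ofReal (tn n))) := by
            rw [ENNReal.div_eq_inv_mul]; ring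
        _ ≤ ENNReal.ofReal ε * (ν Set.univ * (ENNReal.ofReal K + 1)) := by
            exact mul_le_mul_right (mul_le_mul_right hKn.le _) _
    refine le_trans (add_le_add hpart1 hpart2) (le_of_eq ?_)
    rw [hCdef]; ring
  -- a pointwise lower bound
  have h_lb : ∀ (R : ℝ) (z : M), ENNReal.ofReal |H z| ≤ ENNReal.ofReal R + tailF R z := by
    intro R z
    by_cases h : R < |H z|
    · simp only [htailF, if_pos h]
      exact le_add_self
    · simp only [htailF, if_neg h, add_zero]
      exact ENNReal.ofReal_le_ofReal (not_lt.1 h)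
  -- Finiteness of ∫⁻ |H| dμ₀
  have hfin : ∫⁻ z, ENNReal.ofReal |H z| ∂μ₀ < ⊤ := by
    obtain ⟨R₁, hR₁, hEv₁⟩ := h_tail 1 one_pos
    set b₁ : ENNReal := ENNReal.ofReal R₁ + ENNReal.ofReal 1 * C with hb₁
    have hb₁ne : b₁ ≠ ⊤ :=
      ENNReal.add_ne_top.2 ⟨ENNReal.ofReal_ne_top, ENNReal.mul_ne_top ENNReal.ofReal_ne_top hC_ne⟩
    have key : ∀ m : ℕ, ∫⁻ z, ENNReal.ofReal (min |H z| (m:ℝ)) ∂μ₀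
        ≤ ENNReal.ofReal b₁.toReal := by
      intro m
      obtain ⟨G, hG⟩ := stmt11_mkBCF (hH.abs.min continuous_const)
        (fun z => ⟨le_min (abs_nonneg _) (Nat.cast_nonneg m), min_le_right _ _⟩ :
          ∀ z, min |H z| (m:ℝ) ∈ Set.Icc 0 (m:ℝ))
      have hGnn : ∀ z, (0:ℝ) ≤ G z := fun z => by
        rw [hG]; exact le_min (abs_nonneg _) (Nat.cast_nonneg m)
      have hGbd : ∀ᶠ n in atTop, ∫ z, G z ∂(occMeasure x (tn n)) ≤ b₁.toReal := by
        filter_upwards [hEv₁] with n hn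
        rw [integral_eq_lintegral_of_nonneg_ae (Filter.Eventually.of_forall hGnn)
          G.continuous.aestronglyMeasurable]
        refine ENNReal.toReal_mono hb₁ne ?_
        calc ∫⁻ z, ENNReal.ofReal (G z) ∂(occMeasure x (tn n))
            ≤ ∫⁻ z, (ENNReal.ofReal R₁ + tailF R₁ z) ∂(occMeasure x (tn n)) := by
              refine lintegral_mono fun z => ?_
              rw [hG]
              exact le_trans (ENNReal.ofReal_le_ofReal (min_le_left _ _)) (h_lb R₁ z)
          _ = ENNReal.ofReal R₁ * (occMeasure x (tn n)) Set.univ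
              + ∫⁻ z, tailF R₁ z ∂(occMeasure x (tn n)) := by
              rw [lintegral_add_left measurable_const, lintegral_const]
          _ ≤ b₁ := by
              rw [hμuniv n, mul_one, hb₁]
              exact add_le_add le_rfl hn
      have hlim : ∫ z, G z ∂μ₀ ≤ b₁.toReal := le_of_tendsto (hweak G) hGbd
      calc ∫⁻ z, ENNReal.ofReal (min |H z| (m:ℝ)) ∂μ₀
          = ∫⁻ z, ENNReal.ofReal (G z) ∂μ₀ := lintegral_congr fun z => by rw [hG]
        _ = ENNReal.ofReal (∫ z, G z ∂μ₀) :=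
            (ofReal_integral_eq_lintegral_ofReal (G.integrable μ₀)
              (Filter.Eventually.of_forall hGnn)).symm
        _ ≤ ENNReal.ofReal b₁.toReal := ENNReal.ofReal_le_ofReal hlim
    have hsup : ∫⁻ z, ENNReal.ofReal |H z| ∂μ₀
        = ⨆ m : ℕ, ∫⁻ z, ENNReal.ofReal (min |H z| (m:ℝ)) ∂μ₀ := by
      have hmono : Monotone fun (m : ℕ) (z : M) => ENNReal.ofReal (min |H z| (m:ℝ)) := by
        intro m₁ m₂ h z
        exact ENNReal.ofReal_le_ofReal
          (le_min (min_le_left _ _) ((min_le_right _ _).trans (by exact_mod_cast h)))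
      calc ∫⁻ z, ENNReal.ofReal |H z| ∂μ₀
          = ∫⁻ z, ⨆ m : ℕ, ENNReal.ofReal (min |H z| (m:ℝ)) ∂μ₀ := by
            refine lintegral_congr fun z => ?_
            refine le_antisymm ?_ (iSup_le fun m => ENNReal.ofReal_le_ofReal (min_le_left _ _))
            refine le_iSup_of_le ⌈|H z|⌉₊ (le_of_eq ?_)
            rw [min_eq_left (Nat.le_ceil _)]
        _ = ⨆ m : ℕ, ∫⁻ z, ENNReal.ofReal (min |H z| (m:ℝ)) ∂μ₀ :=
            lintegral_iSup (fun m => (hHm.abs.min measurable_const).ennreal_ofReal) hmono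
    rw [hsup]
    exact lt_of_le_of_lt (iSup_le key) ENNReal.ofReal_lt_top
  refine ⟨hfin, ?_⟩
  have habs : ∀ (μ' : Measure M) (g : M → ℝ), |∫ z, g z ∂μ'| ≤ ∫ z, |g z| ∂μ' := by
    intro μ' g
    rw [← Real.norm_eq_abs]
    simpa [Real.norm_eq_abs] using norm_integral_le_integral_norm (μ := μ') g
  have hInt : ∀ n, Integrable H (occMeasure x (tn n)) := by
    intro n
    obtain ⟨B, hB0, hB⟩ := stmt11_bdd_aux x hx_rc hx_ll H hH (tn n)
    refine ⟨hH.aestronglyMeasurable, ?_⟩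
    show ∫⁻ z, (‖H z‖₊ : ENNReal) ∂(occMeasure x (tn n)) < ⊤
    calc ∫⁻ z, (‖H z‖₊ : ENNReal) ∂(occMeasure x (tn n))
        = ∫⁻ z, ENNReal.ofReal |H z| ∂(occMeasure x (tn n)) := by
          refine lintegral_congr fun z => ?_
          exact Real.enorm_eq_ofReal_abs _
      _ = (ENNReal.ofReal (tn n))⁻¹
            * ∫⁻ s in Set.Icc (0:ℝ) (tn n), ENNReal.ofReal |H (x s)| :=
          stmt11_occ_lintegral x (hxae _) hHm.abs.ennreal_ofReal
      _ ≤ (ENNReal.ofReal (tn n))⁻¹ * (ENNReal.ofReal B * ENNReal.ofReal (tn n)) := by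
          gcongr
          calc ∫⁻ s in Set.Icc (0:ℝ) (tn n), ENNReal.ofReal |H (x s)|
              ≤ ∫⁻ _ in Set.Icc (0:ℝ) (tn n), ENNReal.ofReal B :=
                setLIntegral_mono' measurableSet_Icc fun s hs =>
                  ENNReal.ofReal_le_ofReal (hB s hs)
            _ = ENNReal.ofReal B * ENNReal.ofReal (tn n) := by
                rw [setLIntegral_const, Real.volume_Icc, sub_zero]
      _ < ⊤ := ENNReal.mul_lt_top (ENNReal.inv_lt_top.2 (ENNReal.ofReal_pos.2 (htn_pos n)))
          (ENNReal.mul_lt_top ENNReal.ofReal_lt_top ENNReal.ofReal_lt_top)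
  have hIntμ₀ : Integrable H μ₀ := by
    refine ⟨hH.aestronglyMeasurable, ?_⟩
    show ∫⁻ z, (‖H z‖₊ : ENNReal) ∂μ₀ < ⊤
    calc ∫⁻ z, (‖H z‖₊ : ENNReal) ∂μ₀
        = ∫⁻ z, ENNReal.ofReal |H z| ∂μ₀ := by
          refine lintegral_congr fun z => ?_
          exact Real.enorm_eq_ofReal_abs _
      _ < ⊤ := hfin
  refine Metric.tendsto_nhds.mpr fun δ hδ => ?_
  have hCt : (0:ℝ) ≤ C.toReal := ENNReal.toReal_nonneg
  set ε : ℝ := δ / (3 * (C.toReal + 1)) with hεdef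
  have hε : 0 < ε := by positivity
  have hkey : ε * (C.toReal + 1) = δ / 3 := by
    rw [hεdef]; field_simp
  have hεC : ε * C.toReal < δ / 3 := by nlinarith
  obtain ⟨R, hR, hEv⟩ := h_tail ε hε
  set T : M → ℝ := fun z => max (min (H z) R) (-R) with hTdef
  have hT_cont : Continuous T := (hH.min continuous_const).max continuous_const
  obtain ⟨G, hG⟩ := stmt11_mkBCF hT_cont
    (fun z => ⟨le_max_right _ _, max_le (min_le_right _ _) (by linarith)⟩ :
      ∀ z, T z ∈ Set.Icc (-R) R)
  have hTabs : ∀ z, |H z - T z| = max (|H z| - R) 0 := by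
    intro z
    rcases le_or_gt |H z| R with h | h
    · have h1 : H z ≤ R := (le_abs_self _).trans h
      have h2 : -R ≤ H z := le_trans (neg_le_neg h) (neg_abs_le _)
      have hTz : T z = H z := by rw [hTdef]; simp [min_eq_left h1, max_eq_left h2]
      rw [hTz, sub_self, abs_zero, max_eq_right (by linarith)]
    · rcases lt_or_ge R (H z) with h1 | h1
      · have hTz : T z = R := by
          rw [hTdef]; simp [min_eq_right h1.le, max_eq_left (by linarith : -R ≤ R)]
        rw [hTz, abs_of_pos (by linarith : (0:ℝ) < H z - R), abs_of_pos (hR.trans h1),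
          max_eq_left (by linarith)]
      · have hneg : H z < 0 := by
          by_contra hc
          push_neg at hc
          rw [abs_of_nonneg hc] at h
          linarith
        have h2 : H z < -R := by
          rw [abs_of_neg hneg] at h; linarith
        have hTz : T z = -R := by
          rw [hTdef]; simp [min_eq_left h1, max_eq_right h2.le]
        rw [hTz, sub_neg_eq_add, abs_of_neg (by linarith : H z + R < 0),
          abs_of_neg hneg, max_eq_left (by linarith)]
        ring
  have h_pt : ∀ z, ENNReal.ofReal (max (|H z| - R) 0) ≤ tailF R z := by
    intro z
    by_cases h : R < |H z|
    · simp only [htailF, if_pos h]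
      exact ENNReal.ofReal_le_ofReal (max_le (by linarith [abs_nonneg (H z)]) (abs_nonneg _))
    · simp only [htailF, if_neg h]
      rw [max_eq_right (by linarith [not_lt.1 h] : |H z| - R ≤ 0)]
      simp
  have hHTn : ∀ᶠ n in atTop,
      |(∫ z, H z ∂(occMeasure x (tn n))) - ∫ z, G z ∂(occMeasure x (tn n))| ≤ ε * C.toReal := by
    filter_upwards [hEv] with n hn
    haveI := hPM n
    rw [← integral_sub (hInt n) (G.integrable _)]
    calc |∫ z, (H z - G z) ∂(occMeasure x (tn n))|
        ≤ ∫ z, |H z - G z| ∂(occMeasure x (tn n)) := habs _ _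
      _ = (∫⁻ z, ENNReal.ofReal |H z - G z| ∂(occMeasure x (tn n))).toReal := by
          rw [integral_eq_lintegral_of_nonneg_ae (f := fun z => |H z - G z|)
            (Filter.Eventually.of_forall fun z => abs_nonneg _)
            ((hH.sub G.continuous).abs.aestronglyMeasurable)]
      _ ≤ (ENNReal.ofReal ε * C).toReal := by
          refine ENNReal.toReal_mono (ENNReal.mul_ne_top ENNReal.ofReal_ne_top hC_ne) ?_
          refine le_trans (lintegral_mono fun z => ?_) hn
          rw [hG, hTabs]
          exact h_pt z
      _ = ε * C.toReal := by rw [ENNReal.toReal_mul, ENNReal.toReal_ofReal hε.le]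
  have hm_bound : ∀ m : ℕ, ∫⁻ z, ENNReal.ofReal (min (max (|H z| - R) 0) (m:ℝ)) ∂μ₀
      ≤ ENNReal.ofReal (ε * C.toReal) := by
    intro m
    obtain ⟨Gm, hGm⟩ := stmt11_mkBCF (((hH.abs.sub continuous_const).max
      continuous_const).min continuous_const)
      (fun z => ⟨le_min (le_max_right _ _) (Nat.cast_nonneg m), min_le_right _ _⟩ :
        ∀ z, min (max (|H z| - R) 0) (m:ℝ) ∈ Set.Icc 0 (m:ℝ))
    have hGmnn : ∀ z, (0:ℝ) ≤ Gm z := fun z => by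
      rw [hGm]; exact le_min (le_max_right _ _) (Nat.cast_nonneg m)
    have hbd : ∀ᶠ n in atTop, ∫ z, Gm z ∂(occMeasure x (tn n)) ≤ ε * C.toReal := by
      filter_upwards [hEv] with n hn
      haveI := hPM n
      rw [integral_eq_lintegral_of_nonneg_ae (Filter.Eventually.of_forall hGmnn)
        Gm.continuous.aestronglyMeasurable]
      calc (∫⁻ z, ENNReal.ofReal (Gm z) ∂(occMeasure x (tn n))).toReal
          ≤ (ENNReal.ofReal ε * C).toReal := by
            refine ENNReal.toReal_mono (ENNReal.mul_ne_top ENNReal.ofReal_ne_top hC_ne) ?_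
            refine le_trans (lintegral_mono fun z => ?_) hn
            rw [hGm]
            exact le_trans (ENNReal.ofReal_le_ofReal (min_le_left _ _)) (h_pt z)
        _ = ε * C.toReal := by rw [ENNReal.toReal_mul, ENNReal.toReal_ofReal hε.le]
    have hlim : ∫ z, Gm z ∂μ₀ ≤ ε * C.toReal := le_of_tendsto (hweak Gm) hbd
    calc ∫⁻ z, ENNReal.ofReal (min (max (|H z| - R) 0) (m:ℝ)) ∂μ₀
        = ∫⁻ z, ENNReal.ofReal (Gm z) ∂μ₀ := lintegral_congr fun z => by rw [hGm]; rfl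
      _ = ENNReal.ofReal (∫ z, Gm z ∂μ₀) := (ofReal_integral_eq_lintegral_ofReal
          (Gm.integrable μ₀) (Filter.Eventually.of_forall hGmnn)).symm
      _ ≤ ENNReal.ofReal (ε * C.toReal) := ENNReal.ofReal_le_ofReal hlim
  have hlint0 : ∫⁻ z, ENNReal.ofReal |H z - G z| ∂μ₀ ≤ ENNReal.ofReal (ε * C.toReal) := by
    have hmono : Monotone fun (m : ℕ) (z : M) =>
        ENNReal.ofReal (min (max (|H z| - R) 0) (m:ℝ)) := by
      intro m₁ m₂ h z
      exact ENNReal.ofReal_le_ofReal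
        (le_min (min_le_left _ _) ((min_le_right _ _).trans (by exact_mod_cast h)))
    have hps : ∫⁻ z, ENNReal.ofReal |H z - G z| ∂μ₀
        = ∫⁻ z, ⨆ m : ℕ, ENNReal.ofReal (min (max (|H z| - R) 0) (m:ℝ)) ∂μ₀ := by
      refine lintegral_congr fun z => ?_
      rw [hG, hTabs]
      refine le_antisymm ?_ (iSup_le fun m => ENNReal.ofReal_le_ofReal (min_le_left _ _))
      refine le_iSup_of_le ⌈max (|H z| - R) 0⌉₊ (le_of_eq ?_)
      rw [min_eq_left (Nat.le_ceil _)]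
    rw [hps, lintegral_iSup (f := fun (m : ℕ) (z : M) =>
      ENNReal.ofReal (min (max (|H z| - R) 0) (m:ℝ))) (fun m => (((hHm.abs.sub measurable_const).max
      measurable_const).min measurable_const).ennreal_ofReal) hmono]
    exact iSup_le hm_bound
  have hHT0 : |(∫ z, H z ∂μ₀) - ∫ z, G z ∂μ₀| ≤ ε * C.toReal := by
    rw [← integral_sub hIntμ₀ (G.integrable μ₀)]
    calc |∫ z, (H z - G z) ∂μ₀|
        ≤ ∫ z, |H z - G z| ∂μ₀ := habs _ _
      _ = (∫⁻ z, ENNReal.ofReal |H z - G z| ∂μ₀).toReal := by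
          rw [integral_eq_lintegral_of_nonneg_ae (f := fun z => |H z - G z|)
            (Filter.Eventually.of_forall fun z => abs_nonneg _)
            ((hH.sub G.continuous).abs.aestronglyMeasurable)]
      _ ≤ (ENNReal.ofReal (ε * C.toReal)).toReal :=
          ENNReal.toReal_mono ENNReal.ofReal_ne_top hlint0
      _ = ε * C.toReal := ENNReal.toReal_ofReal (by positivity)
  have hmid := Metric.tendsto_nhds.mp (hweak G) (δ/3) (by linarith)
  filter_upwards [hHTn, hmid] with n h1 h2
  have e1 : dist (∫ z, H z ∂(occMeasure x (tn n))) (∫ z, G z ∂(occMeasure x (tn n)))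
      ≤ ε * C.toReal := by rw [Real.dist_eq]; exact h1
  have e3 : dist (∫ z, G z ∂μ₀) (∫ z, H z ∂μ₀) ≤ ε * C.toReal := by
    rw [Real.dist_eq, abs_sub_comm]; exact hHT0
  have h4 := dist_triangle4 (∫ z, H z ∂(occMeasure x (tn n)))
    (∫ z, G z ∂(occMeasure x (tn n))) (∫ z, G z ∂μ₀) (∫ z, H z ∂μ₀)
  have hfinal : dist (∫ z, H z ∂(occMeasure x (tn n))) (∫ z, H z ∂μ₀) < δ := by linarith
  exact hfinal
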